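/- The intersection of the convex hulls of the two m-dimensional cubes constituting the Delone polytope of D_{2m}^* centered at u is the single point u; that is, (convexHull ℝ B_int) ∩ (convexHull ℝ B_half) = {u}. -/

import Mathlib

/-- The two `m`-dimensional cubes constituting the Delone polytope of `D_{2m}^*` centered
at `u` intersect in the single point `u`:
`(convexHull ℝ B_int) ∩ (convexHull ℝ B_half) = {u}`. -/
theorem stmt_5 (m : ℕ) (hm : 1 ≤ m)
    (S : Finset (Fin (2 * m))) (hS : S.card = m)
    (u : EuclideanSpace ℝ (Fin (2 * m)))
    (huS : ∀ i ∈ S, ∃ k : ℤ, u i = (k : ℝ) + 1/2)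
    (huI : ∀ i ∉ S, ∃ k : ℤ, u i = (k : ℝ))
    (Bhalf Bint : Set (EuclideanSpace ℝ (Fin (2 * m))))
    (hBhalf : Bhalf = {x : EuclideanSpace ℝ (Fin (2 * m)) |
      (∀ i ∈ S, x i = u i) ∧ (∀ i ∉ S, |x i - u i| = 1/2)})
    (hBint : Bint = {x : EuclideanSpace ℝ (Fin (2 * m)) |
      (∀ i ∉ S, x i = u i) ∧ (∀ i ∈ S, |x i - u i| = 1/2)}) :
    (convexHull ℝ Bint) ∩ (convexHull ℝ Bhalf) = {u} := by
  ext x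
  constructor
  · rintro ⟨hxI, hxH⟩
    -- convexHull Bint is contained in {x | ∀ i ∉ S, x i = u i}
    have hconv1 : Convex ℝ {x : EuclideanSpace ℝ (Fin (2 * m)) | ∀ i ∉ S, x i = u i} := by
      intro a ha b hb s t hs ht hst
      intro i hi
      have : (s • a + t • b) i = s * a i + t * b i := rfl
      rw [this, ha i hi, hb i hi, ← add_mul, hst, one_mul]
    have hconv2 : Convex ℝ {x : EuclideanSpace ℝ (Fin (2 * m)) | ∀ i ∈ S, x i = u i} := by
      intro a ha b hb s t hs ht hst
      intro i hi
      have : (s • a + t • b) i = s * a i + t * b i := rfl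
      rw [this, ha i hi, hb i hi, ← add_mul, hst, one_mul]
    have h1 : x ∈ {x : EuclideanSpace ℝ (Fin (2 * m)) | ∀ i ∉ S, x i = u i} := by
      refine convexHull_min ?_ hconv1 hxI
      intro y hy
      rw [hBint] at hy
      exact hy.1
    have h2 : x ∈ {x : EuclideanSpace ℝ (Fin (2 * m)) | ∀ i ∈ S, x i = u i} := by
      refine convexHull_min ?_ hconv2 hxH
      intro y hy
      rw [hBhalf] at hy
      exact hy.1
    have : x = u := by
      ext i
      by_cases hi : i ∈ S
      · exact h2 i hi
      · exact h1 i hi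
    simpa using this
  · rintro rfl
    constructor
    · -- u is midpoint of two points of Bint
      set a : EuclideanSpace ℝ (Fin (2 * m)) := WithLp.toLp 2 (fun i => if i ∈ S then x i + 1/2 else x i) with ha
      set b : EuclideanSpace ℝ (Fin (2 * m)) := WithLp.toLp 2 (fun i => if i ∈ S then x i - 1/2 else x i) with hb
      have haB : a ∈ Bint := by
        rw [hBint]
        constructor
        · intro i hi; simp [ha, hi]
        · intro i hi; simp [ha, hi]
      have hbB : b ∈ Bint := by
        rw [hBint]
        constructor
        · intro i hi; simp [hb, hi]
        · intro i hi; simp [hb, hi]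
      have hmid : x = midpoint ℝ a b := by
        ext i
        have : midpoint ℝ a b i = (a i + b i) / 2 := by
          rw [midpoint_eq_smul_add]
          show (2:ℝ)⁻¹ * (a i + b i) = _
          ring
        rw [this]
        by_cases hi : i ∈ S <;> simp [ha, hb, hi] <;> ring
      rw [hmid]
      exact segment_subset_convexHull haB hbB (midpoint_mem_segment a b)
    · set a : EuclideanSpace ℝ (Fin (2 * m)) := WithLp.toLp 2 (fun i => if i ∈ S then x i else x i + 1/2) with ha
      set b : EuclideanSpace ℝ (Fin (2 * m)) := WithLp.toLp 2 (fun i => if i ∈ S then x i else x i - 1/2) with hb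
      have haB : a ∈ Bhalf := by
        rw [hBhalf]
        constructor
        · intro i hi; simp [ha, hi]
        · intro i hi; simp [ha, hi]
      have hbB : b ∈ Bhalf := by
        rw [hBhalf]
        constructor
        · intro i hi; simp [hb, hi]
        · intro i hi; simp [hb, hi]
      have hmid : x = midpoint ℝ a b := by
        ext i
        have : midpoint ℝ a b i = (a i + b i) / 2 := by
          rw [midpoint_eq_smul_add]
          show (2:ℝ)⁻¹ * (a i + b i) = _
          ring
        rw [this]
        by_cases hi : i ∈ S <;> simp [ha, hb, hi] <;> ring
      rw [hmid]
      exact segment_subset_convexHull haB hbB (midpoint_mem_segment a b)
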